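/- arXiv:1903.04397 — 2 statements merged into one kernel-verified Lean document; each statement's English description precedes it below -/
import Mathlib

section
/- Fix α ∈ (0,2] and v ∈ (0,1). Let g : ℝ → ℂ be infinitely differentiable with compact support contained in the ring {η ∈ ℝ : 2π/3 ≤ |η| ≤ 8π/3}, and for (j,k) ∈ ℤ² and x ∈ ℝ set w^v_{α,j,k}(x) := 2^{−jv}(ψ^v(2^j x − k) − ψ^v(−k)), where ψ^v(y) := ∫_ℝ e^{iyη} g(η) |η|^{−(v+1/α)} dη. Then for all constants L > 0 and M > 0 there exists a constant c > 0, depending only on L, v, α, M and g, such that for every x ∈ [−M, M], every integer j ≤ 0 and every k ∈ ℤ, one has |w^v_{α,j,k}(x)| ≤ c · 2^{(1−v)j} (2 + |k|)^{−L}. -/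
open MeasureTheory

/-- The function `ψ^v(y) = ∫_ℝ e^{iyη} g(η) |η|^{-(v+1/α)} dη`. -/
noncomputable def psiV (α v : ℝ) (g : ℝ → ℂ) (y : ℝ) : ℂ :=
  ∫ η : ℝ, Complex.exp (Complex.I * (y : ℂ) * (η : ℂ)) * g η * ((|η| ^ (-(v + 1 / α)) : ℝ) : ℂ)

/-- The wavelet-type coefficient `w^v_{α,j,k}(x) = 2^{-jv} (ψ^v(2^j x - k) - ψ^v(-k))`. -/
noncomputable def wCoef (α v : ℝ) (g : ℝ → ℂ) (j k : ℤ) (x : ℝ) : ℂ :=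
  (((2 : ℝ) ^ (-(j : ℝ) * v) : ℝ) : ℂ) *
    (psiV α v g ((2 : ℝ) ^ (j : ℝ) * x - (k : ℝ)) - psiV α v g (-(k : ℝ)))

set_option maxHeartbeats 1000000 in
open Real SchwartzMap FourierTransform in
/-- For `α ∈ (0,2]`, `v ∈ (0,1)`, `g` smooth with compact support in the ring
`{η : 2π/3 ≤ |η| ≤ 8π/3}`, and all `L > 0` and `M > 0`, there is a constant `c > 0` (depending
only on `L, v, α, M, g`) such that for all `x ∈ [-M, M]`, all integers `j ≤ 0` and all `k ∈ ℤ`: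
`|w^v_{α,j,k}(x)| ≤ c 2^{(1-v)j} (2 + |k|)^{-L}`. -/
theorem stmt_4 (α v : ℝ) (hα : 0 < α) (hα2 : α ≤ 2) (hv : 0 < v) (hv1 : v < 1)
    (g : ℝ → ℂ) (hg : ContDiff ℝ (⊤ : ℕ∞) g)
    (hgsupp : tsupport g ⊆ {η : ℝ | 2 * Real.pi / 3 ≤ |η| ∧ |η| ≤ 8 * Real.pi / 3})
    (L M : ℝ) (hL : 0 < L) (hM : 0 < M) :
    ∃ c : ℝ, 0 < c ∧ ∀ x : ℝ, x ∈ Set.Icc (-M) M → ∀ j : ℤ, j ≤ 0 → ∀ k : ℤ,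
      ‖wCoef α v g j k x‖ ≤
        c * (2 : ℝ) ^ ((1 - v) * (j : ℝ)) * (2 + |(k : ℝ)|) ^ (-L) := by
  have hπ : (0 : ℝ) < Real.pi := Real.pi_pos
  set s : ℝ := -(v + 1 / α) with hs
  set G : ℝ → ℂ := fun η : ℝ => g η * ((|η| ^ s : ℝ) : ℂ) with hGdef
  -- smoothness of `G`
  have hGsmooth : ContDiff ℝ (⊤ : ℕ∞) G := by
    rw [contDiff_iff_contDiffAt]
    intro η
    by_cases hη : η = 0
    · have hmem : η ∉ tsupport g := by
        intro hmemt
        have h1 := (hgsupp hmemt).1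
        rw [hη] at h1
        simp at h1
        nlinarith
      have hev : G =ᶠ[nhds η] (fun _ => 0) := by
        filter_upwards [notMem_tsupport_iff_eventuallyEq.1 hmem] with ζ hζ
        simp [hGdef, hζ]
      exact (contDiffAt_const (c := (0 : ℂ))).congr_of_eventuallyEq hev
    · have habs : ContDiffAt ℝ (⊤ : ℕ∞) (fun ζ : ℝ => |ζ| ^ s) η := by
        rcases lt_or_gt_of_ne hη with hneg | hpos
        · have : (fun ζ : ℝ => |ζ| ^ s) =ᶠ[nhds η] (fun ζ => (-ζ) ^ s) := by
            filter_upwards [eventually_lt_nhds hneg] with ζ hζ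
            rw [abs_of_neg hζ]
          exact (((Real.contDiffAt_rpow_const_of_ne (x := -η) (p := s)
            (by simpa using hη)).comp η (contDiff_neg.contDiffAt))).congr_of_eventuallyEq this
        · have : (fun ζ : ℝ => |ζ| ^ s) =ᶠ[nhds η] (fun ζ => ζ ^ s) := by
            filter_upwards [eventually_gt_nhds hpos] with ζ hζ
            rw [abs_of_pos hζ]
          exact (Real.contDiffAt_rpow_const_of_ne hη).congr_of_eventuallyEq this
      exact hg.contDiffAt.mul (Complex.ofRealCLM.contDiff.contDiffAt.comp η habs)
  -- compact support
  have hKg : HasCompactSupport g := by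
    apply HasCompactSupport.of_support_subset_isCompact
      (isCompact_Icc (a := -(8 * Real.pi / 3)) (b := 8 * Real.pi / 3))
    intro η hη
    exact Set.mem_Icc.2 (abs_le.1 (hgsupp (subset_tsupport g hη)).2)
  have hGsupp : HasCompactSupport G := hKg.mul_right
  -- the Schwartz map `φ` with `⇑φ = G`
  let φ : SchwartzMap ℝ ℂ :=
    { toFun := G
      smooth' := hGsmooth
      decay' := by
        intro k n
        have h1 : HasCompactSupport (fun x : ℝ => ‖x‖ ^ k * ‖iteratedFDeriv ℝ n G x‖) :=
          HasCompactSupport.mul_left ((hGsupp.iteratedFDeriv n).norm)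
        have h2 : Continuous fun x : ℝ => ‖x‖ ^ k * ‖iteratedFDeriv ℝ n G x‖ :=
          (continuous_norm.pow k).mul
            (hGsmooth.continuous_iteratedFDeriv (mod_cast le_top)).norm
        obtain ⟨C, hC⟩ := h2.bounded_above_of_compact_support h1
        exact ⟨C, fun x => by simpa using hC x⟩ }
  set F : SchwartzMap ℝ ℂ := fourierTransformCLM ℂ φ with hF
  set F' : SchwartzMap ℝ ℂ := derivCLM ℝ ℂ F with hF'
  -- the Fourier representation of `psiV`
  have hψ : ∀ y : ℝ, psiV α v g y = F (-y / (2 * Real.pi)) := by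
    intro y
    have hw := Real.fourier_real_eq_integral_exp_smul (f := ⇑φ) (w := -y / (2 * Real.pi))
    rw [hF, fourierTransformCLM_apply, SchwartzMap.fourier_coe, hw, psiV]
    congr 1
    funext η
    have harg : (-2 : ℝ) * Real.pi * η * (-y / (2 * Real.pi)) = y * η := by
      field_simp
    rw [harg, smul_eq_mul]
    show _ * _ * _ = _ * G η
    rw [hGdef,
      show ((y * η : ℝ) : ℂ) * Complex.I = Complex.I * (y : ℂ) * (η : ℂ) by push_cast; ring]
    ring
  -- decay of the derivative
  set n : ℕ := ⌈L⌉₊ with hn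
  have hnL : L ≤ (n : ℝ) := Nat.le_ceil L
  obtain ⟨C₀, hC₀pos, hC₀⟩ := F'.decay 0 0
  obtain ⟨C₁, hC₁pos, hC₁⟩ := F'.decay n 0
  have hC₀' : ∀ u : ℝ, ‖F' u‖ ≤ C₀ := fun u => by
    simpa [norm_iteratedFDeriv_zero] using hC₀ u
  have hC₁' : ∀ u : ℝ, |u| ^ n * ‖F' u‖ ≤ C₁ := fun u => by
    simpa [norm_iteratedFDeriv_zero, Real.norm_eq_abs] using hC₁ u
  set D : ℝ := 2 ^ n * (C₀ + C₁) with hD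
  have hDpos : 0 < D := by positivity
  have hDbd : ∀ u : ℝ, (1 + |u|) ^ n * ‖F' u‖ ≤ D := by
    intro u
    have hu0 : (0 : ℝ) ≤ |u| := abs_nonneg u
    have hpow : (1 + |u|) ^ n ≤ 2 ^ n * (1 + |u| ^ n) := by
      calc (1 + |u|) ^ n ≤ (2 * max 1 |u|) ^ n := by
            apply pow_le_pow_left₀ (by positivity)
            rcases le_total |u| 1 with h | h
            · rw [max_eq_left h]; linarith
            · rw [max_eq_right h]; linarith
        _ = 2 ^ n * (max 1 |u|) ^ n := by rw [mul_pow]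
        _ ≤ 2 ^ n * (1 + |u| ^ n) := by
            have : (max 1 |u|) ^ n ≤ 1 + |u| ^ n := by
              rcases le_total |u| 1 with h | h
              · rw [max_eq_left h, one_pow]
                nlinarith [pow_nonneg hu0 n]
              · rw [max_eq_right h]
                linarith
            exact mul_le_mul_of_nonneg_left this (by positivity)
    calc (1 + |u|) ^ n * ‖F' u‖ ≤ (2 ^ n * (1 + |u| ^ n)) * ‖F' u‖ :=
          mul_le_mul_of_nonneg_right hpow (norm_nonneg _)
      _ = 2 ^ n * (‖F' u‖ + |u| ^ n * ‖F' u‖) := by ring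
      _ ≤ 2 ^ n * (C₀ + C₁) := by
          have := hC₀' u
          have := hC₁' u
          have h2 : (0 : ℝ) ≤ 2 ^ n := by positivity
          nlinarith
  set A : ℝ := 2 + M + 2 * Real.pi with hA
  have hApos : 0 < A := by positivity
  refine ⟨M * A ^ n * D, by positivity, ?_⟩
  intro x hx j hj k
  have hxM : |x| ≤ M := abs_le.2 ⟨hx.1, hx.2⟩
  set t : ℝ := (2 : ℝ) ^ ((j : ℝ)) with ht
  have htpos : 0 < t := Real.rpow_pos_of_pos two_pos _
  have ht1 : t ≤ 1 := Real.rpow_le_one_of_one_le_of_nonpos one_le_two (by exact_mod_cast hj)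
  set a : ℝ := t * x - (k : ℝ) with ha
  set b : ℝ := -(k : ℝ) with hb
  set p : ℝ := -b / (2 * Real.pi) with hp
  set q : ℝ := -a / (2 * Real.pi) with hq
  have hπ3 : (3 : ℝ) < Real.pi := Real.pi_gt_three
  have h2π : (1 : ℝ) ≤ 2 * Real.pi := by linarith
  have hqp : |q - p| ≤ t * M / (2 * Real.pi) := by
    have : q - p = -(t * x) / (2 * Real.pi) := by rw [hp, hq, ha, hb]; ring
    rw [this, abs_div, abs_neg, abs_mul, abs_of_pos htpos,
      abs_of_pos (by positivity : (0:ℝ) < 2 * Real.pi)]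
    gcongr
  have hqpM : |q - p| ≤ M := by
    calc |q - p| ≤ t * M / (2 * Real.pi) := hqp
      _ ≤ t * M := div_le_self (by positivity) h2π
      _ ≤ 1 * M := mul_le_mul_of_nonneg_right ht1 hM.le
      _ = M := one_mul M
  set S : Set ℝ := segment ℝ p q with hS
  have hkabs : (0 : ℝ) ≤ |(k : ℝ)| := abs_nonneg _
  have hbase : (1 : ℝ) ≤ 2 + |(k : ℝ)| := by linarith
  -- derivative bound on the segment
  have hbound : ∀ u ∈ S, ‖F' u‖ ≤ A ^ n * D / (2 + |(k : ℝ)|) ^ n := by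
    intro u hu
    rw [hS, segment_eq_uIcc] at hu
    have hu' : min p q ≤ u ∧ u ≤ max p q := by
      rwa [Set.uIcc, Set.mem_Icc] at hu
    have hup : |u - p| ≤ |q - p| := by
      have h1 : min p q ≤ p := min_le_left p q
      have h2 : p ≤ max p q := le_max_left p q
      have h3 : |q - p| = max p q - min p q := by
        rcases le_total p q with h | h
        · rw [max_eq_right h, min_eq_left h, abs_of_nonneg (by linarith)]
        · rw [max_eq_left h, min_eq_right h, abs_of_nonpos (by linarith)]; ring
      rw [h3, abs_le]
      constructor <;> [linarith [hu'.1, hu'.2]; linarith [hu'.1, hu'.2]]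
    have hkp : |(k : ℝ)| = 2 * Real.pi * |p| := by
      rw [hp, hb, abs_div, abs_of_pos (by positivity : (0:ℝ) < 2 * Real.pi)]
      field_simp
    have hk2 : |(k : ℝ)| ≤ 2 * Real.pi * |u| + M := by
      have hpu : |p| ≤ |u| + |u - p| := by
        have := abs_sub_abs_le_abs_sub p u
        have h := abs_sub_comm p u
        calc |p| ≤ |u| + |p - u| := by linarith [abs_sub_abs_le_abs_sub p u]
          _ = |u| + |u - p| := by rw [abs_sub_comm]
      have hup' : |u - p| ≤ M / (2 * Real.pi) := by
        calc |u - p| ≤ |q - p| := hup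
          _ ≤ t * M / (2 * Real.pi) := hqp
          _ ≤ 1 * M / (2 * Real.pi) := by gcongr
          _ = M / (2 * Real.pi) := by rw [one_mul]
      calc |(k : ℝ)| = 2 * Real.pi * |p| := hkp
        _ ≤ 2 * Real.pi * (|u| + M / (2 * Real.pi)) := by
            apply mul_le_mul_of_nonneg_left _ (by positivity)
            linarith
        _ = 2 * Real.pi * |u| + M := by field_simp
    have hk3 : 2 + |(k : ℝ)| ≤ A * (1 + |u|) := by
      have hu0 : (0 : ℝ) ≤ |u| := abs_nonneg u
      have h5 : 2 * Real.pi * |u| ≤ A * |u| :=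
        mul_le_mul_of_nonneg_right (by rw [hA]; linarith) hu0
      have h6 : A * (1 + |u|) = A + A * |u| := by ring
      have h7 : (2 : ℝ) + M ≤ A := by rw [hA]; linarith
      rw [h6]
      linarith [hk2]
    have hpowk : (2 + |(k : ℝ)|) ^ n ≤ A ^ n * (1 + |u|) ^ n := by
      rw [← mul_pow]
      exact pow_le_pow_left₀ (by linarith) hk3 n
    rw [le_div_iff₀ (by positivity)]
    calc ‖F' u‖ * (2 + |(k : ℝ)|) ^ n ≤ ‖F' u‖ * (A ^ n * (1 + |u|) ^ n) :=
          mul_le_mul_of_nonneg_left hpowk (norm_nonneg _)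
      _ = A ^ n * ((1 + |u|) ^ n * ‖F' u‖) := by ring
      _ ≤ A ^ n * D := mul_le_mul_of_nonneg_left (hDbd u) (by positivity)
  have hder : ∀ u ∈ S, HasDerivWithinAt (⇑F) (F' u) S u := by
    intro u _
    have hd : F' u = deriv (⇑F) u := derivCLM_apply ℝ F u
    rw [hd]
    exact (F.differentiableAt.hasDerivAt).hasDerivWithinAt
  have hmvt : ‖F q - F p‖ ≤ A ^ n * D / (2 + |(k : ℝ)|) ^ n * ‖q - p‖ :=
    (convex_segment p q).norm_image_sub_le_of_norm_hasDerivWithin_le hder hbound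
      (left_mem_segment ℝ p q) (right_mem_segment ℝ p q)
  -- assemble
  have hnorm : ‖wCoef α v g j k x‖ = (2 : ℝ) ^ (-(j : ℝ) * v) * ‖F q - F p‖ := by
    rw [wCoef, norm_mul, Complex.norm_real, Real.norm_eq_abs,
      abs_of_pos (Real.rpow_pos_of_pos two_pos _)]
    congr 1
    rw [hψ, hψ]
  have hEt : (2 : ℝ) ^ (-(j : ℝ) * v) * t = (2 : ℝ) ^ ((1 - v) * (j : ℝ)) := by
    rw [ht, ← Real.rpow_add two_pos]
    congr 1
    ring
  have hrL : ((2 + |(k : ℝ)|) ^ n)⁻¹ ≤ (2 + |(k : ℝ)|) ^ (-L) := by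
    have h1 : (2 + |(k : ℝ)|) ^ (-(n : ℝ)) ≤ (2 + |(k : ℝ)|) ^ (-L) :=
      Real.rpow_le_rpow_of_exponent_le hbase (by linarith)
    rwa [Real.rpow_neg (by linarith), Real.rpow_natCast] at h1
  have hrpowpos : (0 : ℝ) < (2 : ℝ) ^ ((1 - v) * (j : ℝ)) := Real.rpow_pos_of_pos two_pos _
  calc ‖wCoef α v g j k x‖ = (2 : ℝ) ^ (-(j : ℝ) * v) * ‖F q - F p‖ := hnorm
    _ ≤ (2 : ℝ) ^ (-(j : ℝ) * v) * (A ^ n * D / (2 + |(k : ℝ)|) ^ n * ‖q - p‖) :=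
        mul_le_mul_of_nonneg_left hmvt (Real.rpow_pos_of_pos two_pos _).le
    _ ≤ (2 : ℝ) ^ (-(j : ℝ) * v) * (A ^ n * D / (2 + |(k : ℝ)|) ^ n * (t * M)) := by
        apply mul_le_mul_of_nonneg_left _ (Real.rpow_pos_of_pos two_pos _).le
        apply mul_le_mul_of_nonneg_left _ (by positivity)
        rw [Real.norm_eq_abs]
        calc |q - p| ≤ t * M / (2 * Real.pi) := hqp
          _ ≤ t * M := div_le_self (by positivity) h2π
    _ = M * A ^ n * D * ((2 : ℝ) ^ (-(j : ℝ) * v) * t) * ((2 + |(k : ℝ)|) ^ n)⁻¹ := by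
        ring
    _ = M * A ^ n * D * (2 : ℝ) ^ ((1 - v) * (j : ℝ)) * ((2 + |(k : ℝ)|) ^ n)⁻¹ := by
        rw [hEt]
    _ ≤ M * A ^ n * D * (2 : ℝ) ^ ((1 - v) * (j : ℝ)) * (2 + |(k : ℝ)|) ^ (-L) := by
        exact mul_le_mul_of_nonneg_left hrL (by positivity)
end

section
/- Let α ∈ [1,2], N ≥ 1 an integer, H = (H_1,…,H_N) ∈ (0,1)^N, and 0 < a < b constants. For every integer n ≥ 2 there exists a constant c(n) > 0 such that for all t^1,…,t^n ∈ [a,b]^N there exists an n×n real lower-triangular matrix A = (a_{ij}) with a_{ii} = 1 for all 1 ≤ i ≤ n (A may depend on t^1,…,t^n) such that for all u = (u_1,…,u_n) ∈ ℝ^n, writing (v_1,…,v_n) := uA, one has ( ∫_{ℝ^N} | ∑_{j=1}^n u_j F(t^j,λ) |^α dλ )^{1/α} ≥ c(n) [ |v_1| · ( ∫_{ℝ^N} |F(t^1,λ)|^α dλ )^{1/α} + ∑_{j=2}^n |v_j| · dist_α( F(t^j,·), span_ℝ{F(t^1,·),…,F(t^{j−1},·)} ) ], where dist_α(f, V) :=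 inf{ (∫_{ℝ^N}|f(λ) − h(λ)|^α dλ)^{1/α} : h ∈ V }. -/
open MeasureTheory

/-- The harmonizable kernel `F(t,λ) = ∏_l (e^{i t_l λ_l} - 1)|λ_l|^{-(H_l + 1/α)}` (with the
convention that a factor equals `0` when `λ_l = 0`, which is automatic here since
`0^x = 0` for `x ≠ 0` in `Real.rpow` and `e^{i t_l 0} - 1 = 0`). -/
noncomputable def Fker (α : ℝ) (N : ℕ) (H : Fin N → ℝ) (t lam : Fin N → ℝ) : ℂ :=
  ∏ l : Fin N, (Complex.exp (Complex.I * (t l : ℂ) * (lam l : ℂ)) - 1) *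
    ((|lam l| ^ (-(H l + 1 / α)) : ℝ) : ℂ)


open Set Metric
open scoped ENNReal

-- nearest point in a finite-dimensional span
lemma exists_min_linComb {E : Type*} [NormedAddCommGroup E] [NormedSpace ℝ E]
    {m : ℕ} (x : E) (g : Fin m → E) :
    ∃ r : Fin m → ℝ, ∀ s : Fin m → ℝ,
      ‖x - ∑ i, r i • g i‖ ≤ ‖x - ∑ i, s i • g i‖ := by
  set p : Submodule ℝ E := Submodule.span ℝ (Set.range g) with hp
  haveI : FiniteDimensional ℝ p := FiniteDimensional.span_of_finite ℝ (Set.finite_range g)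
  set K : Set p := {y : p | ‖x - (y : E)‖ ≤ ‖x‖} with hK
  have h0K : (0 : p) ∈ K := by simp [hK]
  have hcont : Continuous fun y : p => ‖x - (y : E)‖ :=
    (continuous_const.sub continuous_subtype_val).norm
  have hKc : IsClosed K := isClosed_le hcont continuous_const
  have hKb : K ⊆ closedBall 0 (2 * ‖x‖) := by
    intro y hy
    simp only [mem_closedBall, dist_zero_right]
    have h1 : ‖(y : E)‖ ≤ ‖(y : E) - x‖ + ‖x‖ := by
      have := norm_add_le ((y : E) - x) x
      simpa using this
    have h2 : ‖(y : E) - x‖ = ‖x - (y : E)‖ := norm_sub_rev _ _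
    have : ‖(y : p)‖ = ‖(y : E)‖ := rfl
    rw [this]
    have := hy
    simp only [hK, Set.mem_setOf_eq] at this
    linarith
  have hKcpt : IsCompact K := (isCompact_closedBall (0 : p) (2 * ‖x‖)).of_isClosed_subset hKc hKb
  obtain ⟨y, hyK, hymin⟩ := hKcpt.exists_isMinOn ⟨0, h0K⟩ hcont.continuousOn
  have hglobal : ∀ z : p, ‖x - (y : E)‖ ≤ ‖x - (z : E)‖ := by
    intro z
    by_cases hz : z ∈ K
    · exact hymin hz
    · have : ‖x‖ < ‖x - (z : E)‖ := by
        simp only [hK, Set.mem_setOf_eq, not_le] at hz; exact hz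
      calc ‖x - (y : E)‖ ≤ ‖x‖ := hyK
        _ ≤ ‖x - (z : E)‖ := this.le
  obtain ⟨r, hr⟩ := (Submodule.mem_span_range_iff_exists_fun ℝ).1 y.2
  refine ⟨r, fun s => ?_⟩
  have hs : (∑ i, s i • g i) ∈ p :=
    Submodule.sum_mem _ fun i _ => Submodule.smul_mem _ _ (Submodule.subset_span ⟨i, rfl⟩)
  have := hglobal ⟨∑ i, s i • g i, hs⟩
  rw [hr]
  exact this

lemma abstract_key {E : Type*} [NormedAddCommGroup E] [NormedSpace ℝ E] (m : ℕ) :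
    ∃ c : ℝ, 0 < c ∧ ∀ f : Fin (m+1) → E,
      ∃ A : Matrix (Fin (m+1)) (Fin (m+1)) ℝ,
        (∀ i j : Fin (m+1), i < j → A i j = 0) ∧ (∀ i : Fin (m+1), A i i = 1) ∧
        ∀ u : Fin (m+1) → ℝ,
          c * (|Matrix.vecMul u A 0| * ‖f 0‖
            + ∑ j ∈ Finset.univ.filter (fun j : Fin (m+1) => j ≠ 0),
                |Matrix.vecMul u A j| *
                  ⨅ r : Fin (j : ℕ) → ℝ,
                    ‖f j - ∑ i : Fin (j : ℕ), r i • f (Fin.castLE (le_of_lt j.isLt) i)‖)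
            ≤ ‖∑ j, u j • f j‖ := by
  induction m with
  | zero =>
    refine ⟨1, one_pos, fun f => ⟨1, ?_, fun i => Matrix.one_apply_eq i, ?_⟩⟩
    · intro i j hij
      exact Matrix.one_apply_ne hij.ne
    · intro u
      have h1 : Finset.univ.filter (fun j : Fin 1 => j ≠ 0) = ∅ := by decide
      rw [h1]
      simp [Matrix.vecMul_one, Fin.sum_univ_one, norm_smul]
  | succ m IH =>
    obtain ⟨c, hc, hIH⟩ := IH
    refine ⟨c / (2 + c), by positivity, fun f => ?_⟩
    set f' : Fin (m+1) → E := fun i => f i.castSucc with hf'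
    obtain ⟨A', hA'low, hA'diag, hA'ineq⟩ := hIH f'
    set lst : Fin (m+2) := Fin.last (m+1) with hlst
    obtain ⟨rs, hrs⟩ := exists_min_linComb (f lst) f'
    set g : E := f lst - ∑ i, rs i • f' i with hg
    set A : Matrix (Fin (m+2)) (Fin (m+2)) ℝ := fun i j =>
      if hi : i = lst then (if hj : j = lst then 1 else ∑ k, rs k * A' k (j.castPred hj))
      else if hj : j = lst then 0 else A' (i.castPred hi) (j.castPred hj) with hA
    have hAlow : ∀ i j : Fin (m+2), i < j → A i j = 0 := by
      intro i j hij
      have hi : i ≠ lst := by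
        intro h; rw [h] at hij
        exact absurd hij (by simp [hlst, Fin.le_last, not_lt, Fin.le_last])
      by_cases hj : j = lst
      · simp [hA, hi, hj]
      · have : A' (i.castPred hi) (j.castPred hj) = 0 := by
          apply hA'low
          rwa [Fin.lt_def] at hij ⊢
        simp [hA, hi, hj, this]
    have hAdiag : ∀ i : Fin (m+2), A i i = 1 := by
      intro i
      by_cases hi : i = lst
      · simp [hA, hi]
      · simp [hA, hi, hA'diag]
    refine ⟨A, hAlow, hAdiag, fun u => ?_⟩
    set w : Fin (m+1) → ℝ := fun i => u i.castSucc + u lst * rs i with hw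
    have hv_last : Matrix.vecMul u A lst = u lst := by
      simp only [Matrix.vecMul, dotProduct]
      rw [Fin.sum_univ_castSucc]
      have h1 : ∀ i' : Fin (m+1), A i'.castSucc lst = 0 := by
        intro i'
        have : i'.castSucc ≠ lst := (Fin.castSucc_lt_last i').ne
        simp [hA, this]
      simp [h1, hAdiag lst]
      exact (congrArg (u lst * ·) (hAdiag lst)).trans (mul_one _)
    have hv_cast : ∀ j' : Fin (m+1),
        Matrix.vecMul u A j'.castSucc = Matrix.vecMul w A' j' := by
      intro j'
      simp only [Matrix.vecMul, dotProduct]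
      rw [Fin.sum_univ_castSucc]
      have hne : j'.castSucc ≠ lst := (Fin.castSucc_lt_last j').ne
      have h1 : ∀ i' : Fin (m+1), A i'.castSucc j'.castSucc = A' i' j' := by
        intro i'
        have h2 : i'.castSucc ≠ lst := (Fin.castSucc_lt_last i').ne
        simp [hA, h2, hne, Fin.castPred_castSucc]
      have h3 : A lst j'.castSucc = ∑ k, rs k * A' k j' := by
        simp [hA, hne, Fin.castPred_castSucc]
      simp only [h1, h3, hw]
      rw [show u (Fin.last (m+1)) * A (Fin.last (m+1)) j'.castSucc
          = u lst * ∑ k, rs k * A' k j' from by rw [← h3]]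
      rw [Finset.mul_sum, ← Finset.sum_add_distrib]
      congr 1; funext i'
      ring
    set SE : E := ∑ j, u j • f j with hSE
    have hsum_split : SE = (∑ i' : Fin (m+1), u i'.castSucc • f' i') + u lst • f lst := by
      rw [hSE, Fin.sum_univ_castSucc]
    have hwsum : ∑ i', w i' • f' i' = SE - u lst • g := by
      simp only [hw, hg, add_smul, mul_smul, Finset.sum_add_distrib, smul_sub,
        hsum_split, ← Finset.smul_sum]
      abel
    have hestI : |u lst| * ‖g‖ ≤ ‖SE‖ := by
      by_cases hul : u lst = 0
      · simp [hul]
      · have hine := hrs (fun i' => -(u i'.castSucc) / u lst)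
        have h4 : ∀ i' : Fin (m+1), (-(u i'.castSucc) / u lst) • f' i'
            = -((((u lst)⁻¹ * u i'.castSucc)) • f' i') := by
          intro i'
          rw [← neg_smul]
          congr 1
          rw [neg_div, div_eq_inv_mul]
        have hid : f lst - ∑ i', (-(u i'.castSucc) / u lst) • f' i' = (u lst)⁻¹ • SE := by
          rw [hsum_split, smul_add, smul_smul, inv_mul_cancel₀ hul, one_smul, Finset.smul_sum]
          simp only [h4, Finset.sum_neg_distrib, sub_neg_eq_add, smul_smul]
          rw [add_comm]
        rw [hid] at hine
        calc |u lst| * ‖g‖ ≤ |u lst| * ‖(u lst)⁻¹ • SE‖ :=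
              mul_le_mul_of_nonneg_left hine (abs_nonneg _)
          _ = ‖SE‖ := by
              rw [norm_smul, Real.norm_eq_abs, abs_inv, ← mul_assoc,
                mul_inv_cancel₀ (abs_ne_zero.2 hul), one_mul]
    have hestII : ‖∑ i', w i' • f' i'‖ ≤ 2 * ‖SE‖ := by
      rw [hwsum]
      calc ‖SE - u lst • g‖ ≤ ‖SE‖ + ‖u lst • g‖ := norm_sub_le _ _
        _ = ‖SE‖ + |u lst| * ‖g‖ := by rw [norm_smul, Real.norm_eq_abs]
        _ ≤ ‖SE‖ + ‖SE‖ := by linarith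
        _ = 2 * ‖SE‖ := by ring
    have hIII := (hA'ineq w).trans hestII
    -- infimum over the last row
    set Dl : ℝ := ⨅ r : Fin (m+1) → ℝ, ‖f lst - ∑ i, r i • f' i‖ with hDl
    have hbdd : BddBelow (Set.range fun r : Fin (m+1) → ℝ => ‖f lst - ∑ i, r i • f' i‖) :=
      ⟨0, by rintro _ ⟨r, rfl⟩; exact norm_nonneg _⟩
    have hDl_le : Dl ≤ ‖g‖ := by
      have := ciInf_le hbdd rs
      rwa [← hg] at this
    -- identify the statement infima
    have hDlst_eq : (⨅ r : Fin ((lst : ℕ)) → ℝ,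
        ‖f lst - ∑ i : Fin ((lst : ℕ)), r i • f (Fin.castLE (le_of_lt lst.isLt) i)‖) = Dl := by
      rfl
    have hD_cast : ∀ j' : Fin (m+1),
        (⨅ r : Fin ((j'.castSucc : ℕ)) → ℝ,
          ‖f j'.castSucc - ∑ i : Fin ((j'.castSucc : ℕ)),
            r i • f (Fin.castLE (le_of_lt j'.castSucc.isLt) i)‖)
        = ⨅ r : Fin ((j' : ℕ)) → ℝ,
            ‖f' j' - ∑ i : Fin ((j' : ℕ)), r i • f' (Fin.castLE (le_of_lt j'.isLt) i)‖ := by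
      intro j'
      rfl
    have hv0 : Matrix.vecMul u A 0 = Matrix.vecMul w A' 0 := hv_cast 0
    have hlst_ne : lst ≠ 0 := by
      simp [hlst, Fin.ext_iff]
    have hsplit : (∑ j ∈ Finset.univ.filter (fun j : Fin (m+2) => j ≠ 0),
          |Matrix.vecMul u A j| *
            ⨅ r : Fin (j : ℕ) → ℝ,
              ‖f j - ∑ i : Fin (j : ℕ), r i • f (Fin.castLE (le_of_lt j.isLt) i)‖)
        = (∑ j' ∈ Finset.univ.filter (fun j' : Fin (m+1) => j' ≠ 0),
            |Matrix.vecMul w A' j'| *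
              ⨅ r : Fin ((j' : ℕ)) → ℝ,
                ‖f' j' - ∑ i : Fin ((j' : ℕ)), r i • f' (Fin.castLE (le_of_lt j'.isLt) i)‖)
          + |u lst| * Dl := by
      rw [Finset.sum_filter, Fin.sum_univ_castSucc, Finset.sum_filter]
      congr 1
      · apply Finset.sum_congr rfl
        intro j' _
        by_cases h : j' = 0
        · subst h
          rw [if_neg (by simp), if_neg (by simp)]
        · have h2 : ¬(j'.castSucc = 0) := by
            rwa [Fin.castSucc_eq_zero_iff]
          rw [if_pos h2, if_pos h, hv_cast j', hD_cast j']
      · rw [if_pos hlst_ne, hv_last, hDlst_eq]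
    rw [hsplit, hv0]
    have hT : |Matrix.vecMul w A' 0| * ‖f' 0‖
        + (∑ j' ∈ Finset.univ.filter (fun j' : Fin (m+1) => j' ≠ 0),
            |Matrix.vecMul w A' j'| *
              ⨅ r : Fin ((j' : ℕ)) → ℝ,
                ‖f' j' - ∑ i : Fin ((j' : ℕ)), r i • f' (Fin.castLE (le_of_lt j'.isLt) i)‖)
        ≤ 2 * ‖SE‖ / c := by
      rw [le_div_iff₀ hc, mul_comm]
      exact hIII
    have hlastterm : |u lst| * Dl ≤ ‖SE‖ :=
      le_trans (mul_le_mul_of_nonneg_left hDl_le (abs_nonneg _)) hestI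
    have hkey : c / (2 + c) * (2 * ‖SE‖ / c + ‖SE‖) = ‖SE‖ := by
      field_simp
    calc c / (2 + c) * (|Matrix.vecMul w A' 0| * ‖f 0‖
          + ((∑ j' ∈ Finset.univ.filter (fun j' : Fin (m+1) => j' ≠ 0),
              |Matrix.vecMul w A' j'| *
                ⨅ r : Fin ((j' : ℕ)) → ℝ,
                  ‖f' j' - ∑ i : Fin ((j' : ℕ)), r i • f' (Fin.castLE (le_of_lt j'.isLt) i)‖)
            + |u lst| * Dl))
        ≤ c / (2 + c) * (2 * ‖SE‖ / c + ‖SE‖) := by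
          apply mul_le_mul_of_nonneg_left _ (by positivity)
          have : ‖f 0‖ = ‖f' 0‖ := rfl
          rw [this]
          linarith
      _ = ‖SE‖ := hkey

lemma onedim_integrable {α τ h : ℝ} (hα : 1 ≤ α) (hh0 : 0 < h) (hh1 : h < 1) :
    Integrable (fun x : ℝ =>
      ‖(Complex.exp (Complex.I * τ * x) - 1) * ((|x| ^ (-(h + 1/α)) : ℝ) : ℂ)‖ ^ α) := by
  have hαpos : 0 < α := by linarith
  set β : ℝ := h + 1/α with hβ
  have hβpos : 0 < β := by positivity
  set F : ℝ → ℝ := fun x =>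
    ‖(Complex.exp (Complex.I * τ * x) - 1) * ((|x| ^ (-β) : ℝ) : ℂ)‖ ^ α with hF
  -- measurability
  have hmeas : Measurable F := by
    apply Measurable.pow_const
    apply Measurable.norm
    exact ((Complex.measurable_exp.comp
        (Complex.measurable_ofReal.const_mul (Complex.I * τ))).sub measurable_const).mul
      (Complex.measurable_ofReal.comp (measurable_abs.pow_const _))
  -- value formula
  have hval : ∀ x : ℝ, F x = ‖Complex.exp (Complex.I * τ * x) - 1‖ ^ α * |x| ^ (-β * α) := by
    intro x
    simp only [hF]
    have h1 : ‖((|x| ^ (-β) : ℝ) : ℂ)‖ = |x| ^ (-β) := by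
      rw [Complex.norm_real, Real.norm_eq_abs,
        _root_.abs_of_nonneg (Real.rpow_nonneg (abs_nonneg x) _)]
    rw [norm_mul, h1, Real.mul_rpow (norm_nonneg _) (Real.rpow_nonneg (abs_nonneg x) _),
      ← Real.rpow_mul (abs_nonneg x)]
  -- bounds on the exponential factor
  have hexp_le_two : ∀ x : ℝ, ‖Complex.exp (Complex.I * τ * x) - 1‖ ≤ 2 := by
    intro x
    have h1 : ‖Complex.exp (Complex.I * τ * x)‖ = 1 := by
      have : Complex.I * τ * x = ((τ * x : ℝ) : ℂ) * Complex.I := by push_cast; ring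
      rw [this, Complex.norm_exp_ofReal_mul_I]
    calc ‖Complex.exp (Complex.I * τ * x) - 1‖
        ≤ ‖Complex.exp (Complex.I * τ * x)‖ + ‖(1 : ℂ)‖ := norm_sub_le _ _
      _ ≤ 2 := by rw [h1]; norm_num
  have hexp_le_lin : ∀ x : ℝ, ‖Complex.exp (Complex.I * τ * x) - 1‖ ≤ 2 * (|τ| * |x|) := by
    intro x
    have habs : ‖Complex.I * τ * x‖ = |τ| * |x| := by
      rw [norm_mul, norm_mul, Complex.norm_I, Complex.norm_real, Complex.norm_real, one_mul,
        Real.norm_eq_abs, Real.norm_eq_abs]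
    by_cases hc : ‖Complex.I * τ * x‖ ≤ 1
    · have := Complex.norm_exp_sub_one_le hc
      rw [habs] at this
      exact this
    · push_neg at hc
      rw [habs] at hc
      calc ‖Complex.exp (Complex.I * τ * x) - 1‖ ≤ 2 := hexp_le_two x
        _ ≤ 2 * (|τ| * |x|) := by nlinarith
  -- evenness
  have heven : ∀ x : ℝ, F (-x) = F x := by
    intro x
    rw [hval, hval, abs_neg]
    congr 2
    have hw : Complex.I * τ * ((-x : ℝ) : ℂ) = -(Complex.I * τ * x) := by push_cast; ring
    rw [hw]
    have hexp : Complex.exp (-(Complex.I * τ * x)) - 1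
        = Complex.exp (-(Complex.I * τ * x)) * (1 - Complex.exp (Complex.I * τ * x)) := by
      rw [mul_sub, mul_one, ← Complex.exp_add]
      simp
    rw [hexp, norm_mul]
    have h1 : ‖Complex.exp (-(Complex.I * τ * x))‖ = 1 := by
      have : -(Complex.I * τ * x) = ((-(τ * x) : ℝ) : ℂ) * Complex.I := by push_cast; ring
      rw [this, Complex.norm_exp_ofReal_mul_I]
    rw [h1, one_mul, norm_sub_rev]
  have hFnonneg : ∀ x : ℝ, 0 ≤ F x := fun x => Real.rpow_nonneg (norm_nonneg _) _
  have hexp_eq1 : α + (-β * α) = α - α * h - 1 := by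
    rw [hβ]; field_simp; ring
  have hexp_eq2 : -β * α = -(α * h) - 1 := by
    rw [hβ]; field_simp; ring
  -- integrable on (0, 1]
  have hIoc : IntegrableOn F (Ioc 0 1) := by
    have hint : IntegrableOn (fun x : ℝ => (2 * |τ|) ^ α * x ^ (α - α * h - 1)) (Ioc 0 1) := by
      apply Integrable.const_mul
      have h2 : IntegrableOn (fun x : ℝ => x ^ (α - α * h - 1)) (Ioo 0 1) :=
        (intervalIntegral.integrableOn_Ioo_rpow_iff one_pos).2 (by nlinarith)
      exact h2.congr_set_ae Ioo_ae_eq_Ioc.symm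
    apply Integrable.mono' hint hmeas.aestronglyMeasurable.restrict
    filter_upwards [ae_restrict_mem measurableSet_Ioc] with x hx
    obtain ⟨hx0, hx1⟩ := hx
    rw [Real.norm_eq_abs, _root_.abs_of_nonneg (hFnonneg x), hval]
    have hxabs : |x| = x := abs_of_pos hx0
    calc ‖Complex.exp (Complex.I * τ * x) - 1‖ ^ α * |x| ^ (-β * α)
        ≤ (2 * (|τ| * |x|)) ^ α * |x| ^ (-β * α) :=
          mul_le_mul_of_nonneg_right
            (Real.rpow_le_rpow (norm_nonneg _) (hexp_le_lin x) hαpos.le)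
            (Real.rpow_nonneg (abs_nonneg _) _)
      _ = (2 * |τ|) ^ α * (|x| ^ α * |x| ^ (-β * α)) := by
          rw [show 2 * (|τ| * |x|) = (2 * |τ|) * |x| by ring,
            Real.mul_rpow (by positivity) (abs_nonneg _), mul_assoc]
      _ = (2 * |τ|) ^ α * x ^ (α - α * h - 1) := by
          rw [← Real.rpow_add (abs_pos.2 hx0.ne'), hexp_eq1, hxabs]
  -- integrable on (1, ∞)
  have hIoi1 : IntegrableOn F (Ioi 1) := by
    have hint : IntegrableOn (fun x : ℝ => 2 ^ α * x ^ (-(α * h) - 1)) (Ioi 1) :=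
      Integrable.const_mul (integrableOn_Ioi_rpow_of_lt (by nlinarith) one_pos) _
    apply Integrable.mono' hint hmeas.aestronglyMeasurable.restrict
    filter_upwards [ae_restrict_mem measurableSet_Ioi] with x hx
    have hx0 : (0 : ℝ) < x := lt_trans one_pos hx
    rw [Real.norm_eq_abs, _root_.abs_of_nonneg (hFnonneg x), hval]
    have hxabs : |x| = x := abs_of_pos hx0
    calc ‖Complex.exp (Complex.I * τ * x) - 1‖ ^ α * |x| ^ (-β * α)
        ≤ 2 ^ α * |x| ^ (-β * α) :=
          mul_le_mul_of_nonneg_right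
            (Real.rpow_le_rpow (norm_nonneg _) (hexp_le_two x) hαpos.le)
            (Real.rpow_nonneg (abs_nonneg _) _)
      _ = 2 ^ α * x ^ (-(α * h) - 1) := by rw [hexp_eq2, hxabs]
  have hIci : IntegrableOn F (Ici 0) := by
    have h1 : IntegrableOn F (Ioi 0) := by
      have := hIoc.union hIoi1
      rwa [Set.Ioc_union_Ioi_eq_Ioi zero_le_one] at this
    exact h1.congr_set_ae Ioi_ae_eq_Ici.symm
  have hIic : IntegrableOn F (Iic 0) := by
    have h_map_neg : (volume.restrict (Ici (0:ℝ))).map Neg.neg = volume.restrict (Iic 0) := by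
      conv => rhs; rw [← Measure.map_neg_eq_self (volume : Measure ℝ),
        measurableEmbedding_neg.restrict_map]
      simp
    rw [IntegrableOn, ← h_map_neg, measurableEmbedding_neg.integrable_map_iff]
    have heq : (F ∘ Neg.neg) = F := funext fun x => heven x
    show Integrable (F ∘ Neg.neg) _
    rw [heq]
    exact hIci
  have := hIic.union hIci
  rwa [Set.Iic_union_Ici, integrableOn_univ] at this

lemma fker_measurable (α : ℝ) (N : ℕ) (H : Fin N → ℝ) (t : Fin N → ℝ) :
    Measurable (Fker α N H t) := by
  apply Finset.measurable_prod
  intro l _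
  exact ((Complex.measurable_exp.comp
      ((Complex.measurable_ofReal.comp (measurable_pi_apply l)).const_mul
        (Complex.I * (t l : ℂ)))).sub measurable_const).mul
    (Complex.measurable_ofReal.comp
      ((measurable_abs.comp (measurable_pi_apply l)).pow_const _))

lemma fker_memLp {α : ℝ} (hα : 1 ≤ α) {N : ℕ} {H : Fin N → ℝ}
    (hH : ∀ l, 0 < H l ∧ H l < 1) (t : Fin N → ℝ) :
    MemLp (Fker α N H t) (ENNReal.ofReal α) volume := by
  have hα0 : (0:ℝ) < α := lt_of_lt_of_le one_pos hα
  have hp0 : ENNReal.ofReal α ≠ 0 := by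
    simp only [ne_eq, ENNReal.ofReal_eq_zero, not_le]; linarith
  have hpt : ENNReal.ofReal α ≠ ⊤ := ENNReal.ofReal_ne_top
  have hmeas := fker_measurable α N H t
  refine (memLp_norm_rpow_iff hmeas.aestronglyMeasurable hp0 hpt).mp ?_
  rw [ENNReal.div_self hp0 hpt, memLp_one_iff_integrable, ENNReal.toReal_ofReal hα0.le]
  have heq : (fun x : Fin N → ℝ => ‖Fker α N H t x‖ ^ α)
      = fun x => ∏ l, ‖(Complex.exp (Complex.I * (t l : ℂ) * (x l : ℂ)) - 1) *
          ((|x l| ^ (-(H l + 1/α)) : ℝ) : ℂ)‖ ^ α := by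
    funext x
    rw [Fker, norm_prod, ← Real.finset_prod_rpow _ _ (fun i _ => norm_nonneg _)]
  rw [heq]
  exact Integrable.fintype_prod (𝕜 := ℝ) fun l => onedim_integrable hα (hH l).1 (hH l).2

lemma norm_toLp_eq {α : ℝ} (hα : 1 ≤ α) {N : ℕ} {g : (Fin N → ℝ) → ℂ}
    (hg : MemLp g (ENNReal.ofReal α) volume)
    (X : Lp ℂ (ENNReal.ofReal α) (volume : Measure (Fin N → ℝ)))
    (hX : ⇑X =ᵐ[volume] g) :
    ‖X‖ = (∫ lam, ‖g lam‖ ^ α) ^ (1/α) := by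
  have hα0 : (0:ℝ) < α := lt_of_lt_of_le one_pos hα
  have hp0 : ENNReal.ofReal α ≠ 0 := by
    simp only [ne_eq, ENNReal.ofReal_eq_zero, not_le]; linarith
  have hpt : ENNReal.ofReal α ≠ ⊤ := ENNReal.ofReal_ne_top
  rw [Lp.norm_def, eLpNorm_congr_ae hX, hg.eLpNorm_eq_integral_rpow_norm hp0 hpt,
    ENNReal.toReal_ofReal, ENNReal.toReal_ofReal hα0.le, one_div]
  apply Real.rpow_nonneg
  apply integral_nonneg
  intro x
  positivity

lemma coeFn_finsetSum {δ : Type*} [MeasurableSpace δ] {μ : Measure δ} {p : ℝ≥0∞}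
    {ι : Type*} (s : Finset ι) (G : ι → Lp ℂ p μ) :
    ⇑(∑ i ∈ s, G i) =ᵐ[μ] fun x => ∑ i ∈ s, G i x := by
  classical
  induction s using Finset.induction_on with
  | empty =>
    simp only [Finset.sum_empty]
    exact Lp.coeFn_zero ℂ p μ
  | @insert a s ha ih =>
    rw [Finset.sum_insert ha]
    filter_upwards [Lp.coeFn_add (G a) (∑ i ∈ s, G i), ih] with x h1 h2
    rw [Finset.sum_insert ha, h1]
    simp only [Pi.add_apply, h2]

/-- For `α ∈ [1,2]`, `H ∈ (0,1)^N`, `0 < a < b` and every `n ≥ 2` there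
exists `c(n) > 0` such that for all `t^1, …, t^n ∈ [a,b]^N` (encoded by `t : Fin n → ℝ^N`)
there exists a real lower-triangular `n×n` matrix `A` with unit diagonal such that for all
`u ∈ ℝ^n`, writing `v = u A`,
`(∫ |∑_j u_j F(t^j,λ)|^α dλ)^{1/α} ≥ c(n) (|v_1| ‖F(t^1,·)‖_α + ∑_{j=2}^n |v_j| dist_α(F(t^j,·),
span_ℝ{F(t^1,·),…,F(t^{j-1},·)}))`. -/
theorem stmt_12 (α : ℝ) (hα : 1 ≤ α) (hα2 : α ≤ 2) (N : ℕ) (hN : 1 ≤ N)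
    (H : Fin N → ℝ) (hH : ∀ l, 0 < H l ∧ H l < 1)
    (a b : ℝ) (ha : 0 < a) (hab : a < b)
    (n : ℕ) (hn : 2 ≤ n) :
    ∃ c : ℝ, 0 < c ∧ ∀ t : Fin n → Fin N → ℝ, (∀ i l, t i l ∈ Set.Icc a b) →
      ∃ A : Matrix (Fin n) (Fin n) ℝ,
        (∀ i j : Fin n, i < j → A i j = 0) ∧ (∀ i : Fin n, A i i = 1) ∧
        ∀ u : Fin n → ℝ,
          (∫ lam : Fin N → ℝ, ‖∑ j : Fin n, (u j : ℂ) * Fker α N H (t j) lam‖ ^ α) ^ (1 / α)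
            ≥ c * (|Matrix.vecMul u A ⟨0, by omega⟩| *
                (∫ lam : Fin N → ℝ, ‖Fker α N H (t ⟨0, by omega⟩) lam‖ ^ α) ^ (1 / α)
              + ∑ j ∈ Finset.univ.filter (fun j : Fin n => j ≠ ⟨0, by omega⟩),
                  |Matrix.vecMul u A j| *
                    ⨅ r : Fin (j : ℕ) → ℝ,
                      (∫ lam : Fin N → ℝ,
                        ‖Fker α N H (t j) lam -
                          ∑ i : Fin (j : ℕ), (r i : ℂ) *
                            Fker α N H (t (Fin.castLE (le_of_lt j.isLt) i)) lam‖ ^ α)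
                        ^ (1 / α)) := by
  have hα0 : (0:ℝ) < α := by linarith
  haveI : Fact (1 ≤ ENNReal.ofReal α) :=
    ⟨by rw [← ENNReal.ofReal_one]; exact ENNReal.ofReal_le_ofReal hα⟩
  obtain ⟨m, rfl⟩ : ∃ m, n = m + 1 := ⟨n - 1, by omega⟩
  obtain ⟨c, hc, hkey⟩ := abstract_key (E := Lp ℂ (ENNReal.ofReal α) (volume : Measure (Fin N → ℝ))) m
  refine ⟨c, hc, fun t ht => ?_⟩
  have hmem : ∀ j : Fin (m+1), MemLp (Fker α N H (t j)) (ENNReal.ofReal α) volume :=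
    fun j => fker_memLp hα hH (t j)
  set F : Fin (m+1) → Lp ℂ (ENNReal.ofReal α) (volume : Measure (Fin N → ℝ)) :=
    fun j => (hmem j).toLp (Fker α N H (t j)) with hFdef
  obtain ⟨A, hAlow, hAdiag, hAineq⟩ := hkey F
  refine ⟨A, hAlow, hAdiag, fun u => ?_⟩
  rw [ge_iff_le]
  -- (1) LHS
  have hmem1 : MemLp (fun lam => ∑ j : Fin (m+1), (u j : ℂ) * Fker α N H (t j) lam)
      (ENNReal.ofReal α) volume :=
    memLp_finset_sum _ fun j _ => (hmem j).const_mul _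
  have hX1 : ⇑(∑ j : Fin (m+1), u j • F j) =ᵐ[volume]
      fun lam => ∑ j : Fin (m+1), (u j : ℂ) * Fker α N H (t j) lam := by
    have h1 := coeFn_finsetSum Finset.univ (fun j : Fin (m+1) => u j • F j)
    have h2 : ∀ᵐ x ∂(volume : Measure (Fin N → ℝ)), ∀ j : Fin (m+1),
        (u j • F j) x = u j • (F j) x :=
      ae_all_iff.2 fun j => Lp.coeFn_smul (u j) (F j)
    have h3 : ∀ᵐ x ∂(volume : Measure (Fin N → ℝ)), ∀ j : Fin (m+1),
        (F j) x = Fker α N H (t j) x :=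
      ae_all_iff.2 fun j => (hmem j).coeFn_toLp
    filter_upwards [h1, h2, h3] with x hx1 hx2 hx3
    rw [hx1]
    exact Finset.sum_congr rfl fun j _ => by rw [hx2 j, hx3 j, Complex.real_smul]
  have e1 : (∫ lam : Fin N → ℝ, ‖∑ j : Fin (m+1), (u j : ℂ) * Fker α N H (t j) lam‖ ^ α) ^ (1/α)
      = ‖∑ j : Fin (m+1), u j • F j‖ := (norm_toLp_eq hα hmem1 _ hX1).symm
  rw [e1]
  -- (2) first term
  have e2 : (∫ lam : Fin N → ℝ, ‖Fker α N H (t ⟨0, by omega⟩) lam‖ ^ α) ^ (1/α)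
      = ‖F ⟨0, by omega⟩‖ :=
    (norm_toLp_eq hα (hmem _) _ (hmem _).coeFn_toLp).symm
  rw [e2]
  -- (3) the infima
  have e3 : ∀ j : Fin (m+1), j ≠ ⟨0, by omega⟩ →
      (⨅ r : Fin (j : ℕ) → ℝ,
        (∫ lam : Fin N → ℝ,
          ‖Fker α N H (t j) lam -
            ∑ i : Fin (j : ℕ), (r i : ℂ) *
              Fker α N H (t (Fin.castLE (le_of_lt j.isLt) i)) lam‖ ^ α) ^ (1/α))
      = ⨅ r : Fin (j : ℕ) → ℝ,
          ‖F j - ∑ i : Fin (j : ℕ), r i • F (Fin.castLE (le_of_lt j.isLt) i)‖ := by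
    intro j _
    apply iInf_congr
    intro r
    have hmemr : MemLp (fun lam => Fker α N H (t j) lam -
        ∑ i : Fin (j : ℕ), (r i : ℂ) * Fker α N H (t (Fin.castLE (le_of_lt j.isLt) i)) lam)
        (ENNReal.ofReal α) volume :=
      (hmem j).sub (memLp_finset_sum _ fun i _ => (hmem _).const_mul _)
    have hXr : ⇑(F j - ∑ i : Fin (j : ℕ), r i • F (Fin.castLE (le_of_lt j.isLt) i)) =ᵐ[volume]
        fun lam => Fker α N H (t j) lam -
          ∑ i : Fin (j : ℕ), (r i : ℂ) * Fker α N H (t (Fin.castLE (le_of_lt j.isLt) i)) lam := by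
      have h0 := Lp.coeFn_sub (F j) (∑ i : Fin (j : ℕ), r i • F (Fin.castLE (le_of_lt j.isLt) i))
      have h1 := coeFn_finsetSum Finset.univ
        (fun i : Fin (j : ℕ) => r i • F (Fin.castLE (le_of_lt j.isLt) i))
      have h2 : ∀ᵐ x ∂(volume : Measure (Fin N → ℝ)), ∀ i : Fin (j : ℕ),
          (r i • F (Fin.castLE (le_of_lt j.isLt) i)) x
            = r i • (F (Fin.castLE (le_of_lt j.isLt) i)) x :=
        ae_all_iff.2 fun i => Lp.coeFn_smul (r i) _
      have h3 : ∀ᵐ x ∂(volume : Measure (Fin N → ℝ)), ∀ j : Fin (m+1),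
          (F j) x = Fker α N H (t j) x :=
        ae_all_iff.2 fun j => (hmem j).coeFn_toLp
      filter_upwards [h0, h1, h2, h3] with x hx0 hx1 hx2 hx3
      rw [hx0]
      simp only [Pi.sub_apply]
      rw [hx1, hx3 j]
      congr 1
      exact Finset.sum_congr rfl fun i _ => by rw [hx2 i, hx3 _, Complex.real_smul]
    exact (norm_toLp_eq hα hmemr _ hXr).symm
  have e3sum : (∑ j ∈ Finset.univ.filter (fun j : Fin (m+1) => j ≠ ⟨0, by omega⟩),
        |Matrix.vecMul u A j| *
          ⨅ r : Fin (j : ℕ) → ℝ,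
            (∫ lam : Fin N → ℝ,
              ‖Fker α N H (t j) lam -
                ∑ i : Fin (j : ℕ), (r i : ℂ) *
                  Fker α N H (t (Fin.castLE (le_of_lt j.isLt) i)) lam‖ ^ α) ^ (1/α))
      = ∑ j ∈ Finset.univ.filter (fun j : Fin (m+1) => j ≠ ⟨0, by omega⟩),
          |Matrix.vecMul u A j| *
            ⨅ r : Fin (j : ℕ) → ℝ,
              ‖F j - ∑ i : Fin (j : ℕ), r i • F (Fin.castLE (le_of_lt j.isLt) i)‖ :=
    Finset.sum_congr rfl fun j hj => by
      rw [e3 j (Finset.mem_filter.1 hj).2]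
  rw [e3sum]
  exact hAineq u
end
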